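/- arXiv:2408.09770 — 2 statements merged into one kernel-verified Lean document; each statement's English description precedes it below -/
import Mathlib

section
/- The AVM decomposition is exact: for any two probability distributions F and G on the real line (identified with their CDFs, with left-continuous generalized quantile functions F^{-1}, G^{-1}), the area validation metric AVM(F,G) = ∫_0^1 |F^{-1}(τ) − G^{-1}(τ)| dτ equals Shift_+ + Shift_- + Disp_+ + Disp_-, where Disp_+(F,G) = (1/2)∫_0^1 [ (F^{-1}((1+α)/2) − G^{-1}((1+α)/2)) − (F^{-1}((1−α)/2) − G^{-1}((1−α)/2)) ]_+ dα, Shift_+(F,G) = ∫_0^1 [ min{ F^{-1}((1+α)/2) − G^{-1}((1+α)/2), F^{-1}((1−α)/2) − G^{-1}((1−α)/2) } ]_+ dα, and Shift_-(F,G) = Shift_+(G,F), Disp_-(F,G) = Disp_+(G,F). -/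
open MeasureTheory intervalIntegral

/-- Generalized quantile function (left-inverse of a CDF). -/
noncomputable def quantile (F : ℝ → ℝ) (τ : ℝ) : ℝ := sInf {x | τ ≤ F x}

/-- `Disp₊^AVM` component. -/
noncomputable def avmDispPlus (qF qG : ℝ → ℝ) : ℝ :=
  (1 / 2) * ∫ α in (0:ℝ)..1,
    max ((qF ((1 + α) / 2) - qG ((1 + α) / 2)) -
         (qF ((1 - α) / 2) - qG ((1 - α) / 2))) 0

/-- `Shift₊^AVM` component. -/
noncomputable def avmShiftPlus (qF qG : ℝ → ℝ) : ℝ :=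
  ∫ α in (0:ℝ)..1,
    max (min (qF ((1 + α) / 2) - qG ((1 + α) / 2))
             (qF ((1 - α) / 2) - qG ((1 - α) / 2))) 0

lemma avm_key_pointwise (a b : ℝ) :
    |a|/2 + |b|/2 = max (min a b) 0 + max (min (-a) (-b)) 0
      + 1/2 * max (a - b) 0 + 1/2 * max (b - a) 0 := by
  wlog hab : b ≤ a generalizing a b
  · rw [min_comm, min_comm (-a)]; linarith [this b a (le_of_not_ge hab)]
  rw [min_eq_right hab, min_eq_left (neg_le_neg hab),
    max_eq_left (sub_nonneg.2 hab), max_eq_right (sub_nonpos.2 hab)]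
  rcases le_or_gt 0 b with hb | hb
  · rw [max_eq_left hb, max_eq_right (neg_nonpos.2 (hb.trans hab)),
      abs_of_nonneg (hb.trans hab), abs_of_nonneg hb]; ring
  · rcases le_or_gt a 0 with ha | ha
    · rw [max_eq_right hb.le, max_eq_left (neg_nonneg.2 ha),
        abs_of_nonpos ha, abs_of_nonpos hb.le]; ring
    · rw [max_eq_right hb.le, max_eq_right (neg_nonpos.2 ha.le),
        abs_of_pos ha, abs_of_neg hb]; ring

lemma avm_key (p q r s : ℝ) :
    |p - q|/2 + |r - s|/2 =
      max (min (p - q) (r - s)) 0 + max (min (q - p) (s - r)) 0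
      + 1/2 * max ((p - q) - (r - s)) 0 + 1/2 * max ((q - p) - (s - r)) 0 := by
  rw [show (q - p) - (s - r) = (r - s) - (p - q) by ring]
  simpa only [neg_sub] using avm_key_pointwise (p - q) (r - s)

/-- Change of variables: upper half. -/
lemma avm_cov_hi (f : ℝ → ℝ) :
    (∫ α in (0:ℝ)..1, f ((1 + α) / 2)) = 2 * ∫ τ in (1/2:ℝ)..1, f τ := by
  have h : ∀ α : ℝ, (1 + α) / 2 = 1/2 + (1/2) * α := fun α => by ring
  simp only [h]
  rw [integral_comp_add_mul f (by norm_num : (1:ℝ)/2 ≠ 0) (1/2)]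
  norm_num [smul_eq_mul]

/-- Change of variables: lower half. -/
lemma avm_cov_lo (f : ℝ → ℝ) :
    (∫ α in (0:ℝ)..1, f ((1 - α) / 2)) = 2 * ∫ τ in (0:ℝ)..(1/2:ℝ), f τ := by
  have h : ∀ α : ℝ, (1 - α) / 2 = 1/2 - (1/2) * α := fun α => by ring
  simp only [h]
  rw [integral_comp_sub_mul f (by norm_num : (1:ℝ)/2 ≠ 0) (1/2)]
  norm_num [smul_eq_mul]

lemma avm_ii_hi {f : ℝ → ℝ} (hf : IntervalIntegrable f volume (1/2) 1) :
    IntervalIntegrable (fun α => f ((1 + α) / 2)) volume 0 1 := by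
  have h1 := hf.comp_add_right (1/2)
  norm_num at h1
  have h2 := h1.comp_mul_left (c := 1/2) (h := enorm_ne_top) (h' := enorm_ne_top)
  norm_num at h2
  have : (fun x : ℝ => f (1/2 * x + 1/2)) = fun α => f ((1 + α) / 2) := by
    funext x; congr 1; ring
  rwa [this] at h2

lemma avm_ii_lo {f : ℝ → ℝ} (hf : IntervalIntegrable f volume 0 (1/2)) :
    IntervalIntegrable (fun α => f ((1 - α) / 2)) volume 0 1 := by
  have h1 := hf.comp_sub_left (1/2)
  norm_num at h1
  have h2 := h1.symm.comp_mul_left (c := 1/2) (h := enorm_ne_top) (h' := enorm_ne_top)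
  norm_num at h2
  have : (fun x : ℝ => f (1/2 - 1/2 * x)) = fun α => f ((1 - α) / 2) := by
    funext x; congr 1; ring
  rwa [this] at h2

/-- The AVM decomposition is exact. -/
theorem avm_decomposition_exact (F G : ℝ → ℝ)
    (hF : Monotone F) (hG : Monotone G)
    (hF0 : Filter.Tendsto F Filter.atBot (nhds 0))
    (hF1 : Filter.Tendsto F Filter.atTop (nhds 1))
    (hG0 : Filter.Tendsto G Filter.atBot (nhds 0))
    (hG1 : Filter.Tendsto G Filter.atTop (nhds 1))
    (hAVM : IntervalIntegrable
      (fun τ => |quantile F τ - quantile G τ|) volume 0 1)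
    (hSp : IntervalIntegrable (fun α =>
      max (min (quantile F ((1 + α) / 2) - quantile G ((1 + α) / 2))
               (quantile F ((1 - α) / 2) - quantile G ((1 - α) / 2))) 0) volume 0 1)
    (hSm : IntervalIntegrable (fun α =>
      max (min (quantile G ((1 + α) / 2) - quantile F ((1 + α) / 2))
               (quantile G ((1 - α) / 2) - quantile F ((1 - α) / 2))) 0) volume 0 1)
    (hDp : IntervalIntegrable (fun α =>
      max ((quantile F ((1 + α) / 2) - quantile G ((1 + α) / 2)) -
           (quantile F ((1 - α) / 2) - quantile G ((1 - α) / 2))) 0) volume 0 1)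
    (hDm : IntervalIntegrable (fun α =>
      max ((quantile G ((1 + α) / 2) - quantile F ((1 + α) / 2)) -
           (quantile G ((1 - α) / 2) - quantile F ((1 - α) / 2))) 0) volume 0 1) :
    (∫ τ in (0:ℝ)..1, |quantile F τ - quantile G τ|) =
      avmShiftPlus (quantile F) (quantile G) +
      avmShiftPlus (quantile G) (quantile F) +
      avmDispPlus (quantile F) (quantile G) +
      avmDispPlus (quantile G) (quantile F) := by
  set f : ℝ → ℝ := fun τ => |quantile F τ - quantile G τ| with hfdef
  have hmem0 : (0:ℝ) ∈ Set.uIcc (0:ℝ) 1 := Set.mem_uIcc.2 (Or.inl ⟨le_rfl, zero_le_one⟩)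
  have hmemh : (1/2:ℝ) ∈ Set.uIcc (0:ℝ) 1 := Set.mem_uIcc.2 (Or.inl ⟨by norm_num, by norm_num⟩)
  have hmem1 : (1:ℝ) ∈ Set.uIcc (0:ℝ) 1 := Set.mem_uIcc.2 (Or.inl ⟨zero_le_one, le_rfl⟩)
  have hlo : IntervalIntegrable f volume 0 (1/2) :=
    hAVM.mono_set (Set.uIcc_subset_uIcc hmem0 hmemh)
  have hhi : IntervalIntegrable f volume (1/2) 1 :=
    hAVM.mono_set (Set.uIcc_subset_uIcc hmemh hmem1)
  have haInt : IntervalIntegrable (fun α => f ((1 + α) / 2)) volume 0 1 := avm_ii_hi hhi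
  have hbInt : IntervalIntegrable (fun α => f ((1 - α) / 2)) volume 0 1 := avm_ii_lo hlo
  -- LHS as a single integral over α
  have hsplit : (∫ τ in (0:ℝ)..1, f τ)
      = ∫ α in (0:ℝ)..1, (f ((1 + α) / 2) / 2 + f ((1 - α) / 2) / 2) := by
    rw [← integral_add_adjacent_intervals hlo hhi,
      integral_add (haInt.div_const 2) (hbInt.div_const 2)]
    have h1 : (∫ α in (0:ℝ)..1, f ((1 + α) / 2) / 2)
        = (∫ α in (0:ℝ)..1, f ((1 + α) / 2)) / 2 := integral_div 2 _
    have h2 : (∫ α in (0:ℝ)..1, f ((1 - α) / 2) / 2)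
        = (∫ α in (0:ℝ)..1, f ((1 - α) / 2)) / 2 := integral_div 2 _
    rw [h1, h2, avm_cov_hi f, avm_cov_lo f]
    ring
  -- pointwise identity
  have hpt : ∀ α : ℝ, f ((1 + α) / 2) / 2 + f ((1 - α) / 2) / 2 =
      max (min (quantile F ((1 + α) / 2) - quantile G ((1 + α) / 2))
               (quantile F ((1 - α) / 2) - quantile G ((1 - α) / 2))) 0
      + max (min (quantile G ((1 + α) / 2) - quantile F ((1 + α) / 2))
               (quantile G ((1 - α) / 2) - quantile F ((1 - α) / 2))) 0
      + 1/2 * max ((quantile F ((1 + α) / 2) - quantile G ((1 + α) / 2)) -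
           (quantile F ((1 - α) / 2) - quantile G ((1 - α) / 2))) 0
      + 1/2 * max ((quantile G ((1 + α) / 2) - quantile F ((1 + α) / 2)) -
           (quantile G ((1 - α) / 2) - quantile F ((1 - α) / 2))) 0 := fun α =>
    avm_key (quantile F ((1 + α) / 2)) (quantile G ((1 + α) / 2))
      (quantile F ((1 - α) / 2)) (quantile G ((1 - α) / 2))
  rw [hsplit]
  rw [integral_congr (g := fun α =>
      max (min (quantile F ((1 + α) / 2) - quantile G ((1 + α) / 2))
               (quantile F ((1 - α) / 2) - quantile G ((1 - α) / 2))) 0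
      + max (min (quantile G ((1 + α) / 2) - quantile F ((1 + α) / 2))
               (quantile G ((1 - α) / 2) - quantile F ((1 - α) / 2))) 0
      + 1/2 * max ((quantile F ((1 + α) / 2) - quantile G ((1 + α) / 2)) -
           (quantile F ((1 - α) / 2) - quantile G ((1 - α) / 2))) 0
      + 1/2 * max ((quantile G ((1 + α) / 2) - quantile F ((1 + α) / 2)) -
           (quantile G ((1 - α) / 2) - quantile F ((1 - α) / 2))) 0) (fun α _ => hpt α)]
  rw [integral_add ((hSp.add hSm).add (hDp.const_mul (1/2))) (hDm.const_mul (1/2)),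
    integral_add (hSp.add hSm) (hDp.const_mul (1/2)), integral_add hSp hSm,
    intervalIntegral.integral_const_mul, intervalIntegral.integral_const_mul]
  simp only [avmShiftPlus, avmDispPlus]
end

section
/- The Cramér distance CD(F,G) = ∫_{-∞}^{∞} (F(x) − G(x))^2 dx admits the quantile representation CD(F,G) = 2 ∫_0^1 ∫_0^1 χ(τ,ξ) · |F^{-1}(τ) − G^{-1}(ξ)| dτ dξ, where χ(τ,ξ) = 1 if sgn(τ − ξ) ≠ sgn(F^{-1}(τ) − G^{-1}(ξ)) and 0 otherwise. -/
open MeasureTheory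
open scoped ENNReal Classical

section Aux

open Filter Set

private lemma vol_between {c d : ℝ} {s : Set ℝ} (h1 : Set.Ioo c d ⊆ s) (h2 : s ⊆ Set.Icc c d) :
    volume s = ENNReal.ofReal (d - c) := by
  refine le_antisymm ?_ ?_
  · calc volume s ≤ volume (Set.Icc c d) := measure_mono h2
      _ = ENNReal.ofReal (d - c) := Real.volume_Icc
  · calc ENNReal.ofReal (d - c) = volume (Set.Ioo c d) := Real.volume_Ioo.symm
      _ ≤ volume s := measure_mono h1

private lemma quantile_le_iff {F : ℝ → ℝ} (hF : Monotone F)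
    (hFrc : ∀ x, ContinuousWithinAt F (Set.Ici x) x)
    (hF0 : Filter.Tendsto F Filter.atBot (nhds 0))
    (hF1 : Filter.Tendsto F Filter.atTop (nhds 1))
    {τ : ℝ} (h0 : 0 < τ) (h1 : τ < 1) (x : ℝ) :
    quantile F τ ≤ x ↔ τ ≤ F x := by
  have hne : {y : ℝ | τ ≤ F y}.Nonempty := by
    obtain ⟨y, hy⟩ := (hF1.eventually (eventually_gt_nhds h1)).exists
    exact ⟨y, le_of_lt hy⟩
  have hbdd : BddBelow {y : ℝ | τ ≤ F y} := by
    obtain ⟨y₀, hy₀⟩ := (hF0.eventually (eventually_lt_nhds h0)).exists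
    refine ⟨y₀, fun s hs => ?_⟩
    by_contra hlt
    exact absurd (hs.trans (hF (le_of_not_ge hlt))) (not_le.2 hy₀)
  have hmem : τ ≤ F (quantile F τ) := by
    have hlim : Filter.Tendsto F (nhdsWithin (quantile F τ) (Set.Ioi (quantile F τ)))
        (nhds (F (quantile F τ))) :=
      (hFrc _).mono_left (nhdsWithin_mono _ Set.Ioi_subset_Ici_self)
    refine ge_of_tendsto hlim (eventually_nhdsWithin_of_forall fun y hy => ?_)
    obtain ⟨s, hsS, hsy⟩ := (csInf_lt_iff hbdd hne).mp hy
    exact hsS.trans (hF hsy.le)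
  constructor
  · intro h; exact hmem.trans (hF h)
  · intro h; exact csInf_le hbdd h

private lemma lint_sd (u v : ℝ) :
    (∫⁻ x : ℝ, (if (u ≤ x) ≠ (v ≤ x) then (1:ℝ≥0∞) else 0)) = ENNReal.ofReal |u - v| := by
  have key : ∀ u v : ℝ, u ≤ v → {x : ℝ | (u ≤ x) ≠ (v ≤ x)} = Set.Ico u v := by
    intro u v h
    ext x
    have himp : v ≤ x → u ≤ x := fun hv => h.trans hv
    simp only [Set.mem_setOf_eq, Set.mem_Ico, ne_eq, eq_iff_iff, lt_iff_not_ge]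
    tauto
  have main : ∀ u v : ℝ, u ≤ v →
      (∫⁻ x : ℝ, (if (u ≤ x) ≠ (v ≤ x) then (1:ℝ≥0∞) else 0)) = ENNReal.ofReal (v - u) := by
    intro u v h
    calc (∫⁻ x : ℝ, (if (u ≤ x) ≠ (v ≤ x) then (1:ℝ≥0∞) else 0))
        = ∫⁻ x : ℝ, ({x : ℝ | (u ≤ x) ≠ (v ≤ x)}).indicator (fun _ => (1:ℝ≥0∞)) x := by
          refine lintegral_congr fun x => ?_
          simp [Set.indicator_apply]
      _ = volume (Set.Ico u v) := by
          rw [key u v h, lintegral_indicator measurableSet_Ico, setLIntegral_one]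
      _ = ENNReal.ofReal (v - u) := Real.volume_Ico
  rcases le_total u v with h | h
  · rw [main u v h, abs_sub_comm, abs_of_nonneg (sub_nonneg.2 h)]
  · calc (∫⁻ x : ℝ, (if (u ≤ x) ≠ (v ≤ x) then (1:ℝ≥0∞) else 0))
        = (∫⁻ x : ℝ, (if (v ≤ x) ≠ (u ≤ x) then (1:ℝ≥0∞) else 0)) :=
          lintegral_congr fun x => if_congr ne_comm rfl rfl
      _ = ENNReal.ofReal (u - v) := main v u h
      _ = ENNReal.ofReal |u - v| := by rw [abs_of_nonneg (sub_nonneg.2 h)]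

private lemma restrict_Ioc_inter {c d : ℝ} (hc : 0 ≤ c) (hd : d ≤ 1) :
    (volume : Measure ℝ).restrict (Set.Ioc c d ∩ Set.Ioo 0 1)
      = (volume : Measure ℝ).restrict (Set.Ioc c d) := by
  refine Measure.restrict_congr_set (ae_eq_set.2 ⟨?_, ?_⟩)
  · rw [Set.diff_eq_empty.2 Set.inter_subset_left]
    exact measure_empty
  · refine measure_mono_null ?_ (measure_singleton (1:ℝ))
    intro x hx
    have hx1 : x ∈ Set.Ioc c d := hx.1
    have hx2 : x ∉ Set.Ioo (0:ℝ) 1 := fun h => hx.2 ⟨hx1, h⟩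
    have h0 : 0 < x := lt_of_le_of_lt hc hx1.1
    have h1 : (1:ℝ) ≤ x := by
      by_contra h
      exact hx2 ⟨h0, lt_of_not_ge h⟩
    exact Set.mem_singleton_iff.2 (le_antisymm (hx1.2.trans hd) h1)

private lemma lint_Ioc_sub_left {c d : ℝ} (h : c ≤ d) :
    (∫⁻ ξ in Set.Ioc c d, ENNReal.ofReal (d - ξ)) = ENNReal.ofReal ((d - c)^2 / 2) := by
  have hcont : Continuous fun ξ : ℝ => d - ξ := by continuity
  rw [← ofReal_integral_eq_lintegral_ofReal (f := fun ξ => d - ξ)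
      hcont.integrableOn_Ioc
      ((ae_restrict_iff' measurableSet_Ioc).2 (ae_of_all _ fun ξ hξ => sub_nonneg.2 hξ.2))]
  congr 1
  rw [← intervalIntegral.integral_of_le h,
    intervalIntegral.integral_sub intervalIntegrable_const intervalIntegral.intervalIntegrable_id,
    intervalIntegral.integral_const, integral_id]
  simp only [smul_eq_mul]
  ring

private lemma lint_Ioc_sub_right {c d : ℝ} (h : c ≤ d) :
    (∫⁻ ξ in Set.Ioc c d, ENNReal.ofReal (ξ - c)) = ENNReal.ofReal ((d - c)^2 / 2) := by
  have hcont : Continuous fun ξ : ℝ => ξ - c := by continuity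
  rw [← ofReal_integral_eq_lintegral_ofReal (f := fun ξ => ξ - c)
      hcont.integrableOn_Ioc
      ((ae_restrict_iff' measurableSet_Ioc).2 (ae_of_all _ fun ξ hξ => sub_nonneg.2 hξ.1.le))]
  congr 1
  rw [← intervalIntegral.integral_of_le h,
    intervalIntegral.integral_sub intervalIntegral.intervalIntegrable_id intervalIntegrable_const,
    intervalIntegral.integral_const, integral_id]
  simp only [smul_eq_mul]
  ring

private lemma tri (a b : ℝ) (hb : 0 ≤ b) (hba : b ≤ a) (ha : a ≤ 1) :
    (∫⁻ ξ in Set.Ioo (0:ℝ) 1, ∫⁻ τ in Set.Ioo (0:ℝ) 1,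
      (if b < ξ ∧ ξ ≤ τ ∧ τ ≤ a then (1:ℝ≥0∞) else 0)) = ENNReal.ofReal ((a - b)^2 / 2) := by
  have inner : ∀ ξ : ℝ, (∫⁻ τ in Set.Ioo (0:ℝ) 1, (if b < ξ ∧ ξ ≤ τ ∧ τ ≤ a then (1:ℝ≥0∞) else 0))
      = (Set.Ioc b a).indicator (fun ξ => ENNReal.ofReal (a - ξ)) ξ := by
    intro ξ
    by_cases hξ : b < ξ ∧ ξ ≤ a
    · have hpt : ∀ τ : ℝ, (if b < ξ ∧ ξ ≤ τ ∧ τ ≤ a then (1:ℝ≥0∞) else 0)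
          = (Set.Icc ξ a).indicator (fun _ => (1:ℝ≥0∞)) τ := by
        intro τ
        rw [Set.indicator_apply]
        by_cases h : τ ∈ Set.Icc ξ a
        · rw [if_pos ⟨hξ.1, h.1, h.2⟩, if_pos h]
        · rw [if_neg, if_neg h]
          rintro ⟨-, h1, h2⟩; exact h ⟨h1, h2⟩
      rw [lintegral_congr hpt, lintegral_indicator measurableSet_Icc, setLIntegral_one,
        Measure.restrict_apply measurableSet_Icc, Set.indicator_of_mem (Set.mem_Ioc.2 hξ)]
      refine vol_between (fun τ hτ => ⟨⟨hτ.1.le, hτ.2.le⟩,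
        ⟨lt_of_le_of_lt hb (hξ.1.trans hτ.1), lt_of_lt_of_le hτ.2 ha⟩⟩) Set.inter_subset_left
    · have hpt : ∀ τ : ℝ, (if b < ξ ∧ ξ ≤ τ ∧ τ ≤ a then (1:ℝ≥0∞) else 0) = 0 := by
        intro τ
        rw [if_neg]
        rintro ⟨h1, h2, h3⟩; exact hξ ⟨h1, h2.trans h3⟩
      rw [lintegral_congr hpt, lintegral_zero,
        Set.indicator_of_notMem (fun hm => hξ (Set.mem_Ioc.1 hm))]
  rw [lintegral_congr inner, lintegral_indicator measurableSet_Ioc,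
    Measure.restrict_restrict measurableSet_Ioc, restrict_Ioc_inter hb ha,
    lint_Ioc_sub_left hba]

private lemma tri2 (a b : ℝ) (ha0 : 0 ≤ a) (hab : a ≤ b) (hb1 : b ≤ 1) :
    (∫⁻ ξ in Set.Ioo (0:ℝ) 1, ∫⁻ τ in Set.Ioo (0:ℝ) 1,
      (if a < τ ∧ τ ≤ ξ ∧ ξ ≤ b then (1:ℝ≥0∞) else 0)) = ENNReal.ofReal ((b - a)^2 / 2) := by
  have inner : ∀ ξ : ℝ, (∫⁻ τ in Set.Ioo (0:ℝ) 1, (if a < τ ∧ τ ≤ ξ ∧ ξ ≤ b then (1:ℝ≥0∞) else 0))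
      = (Set.Ioc a b).indicator (fun ξ => ENNReal.ofReal (ξ - a)) ξ := by
    intro ξ
    by_cases hξ : a < ξ ∧ ξ ≤ b
    · have hpt : ∀ τ : ℝ, (if a < τ ∧ τ ≤ ξ ∧ ξ ≤ b then (1:ℝ≥0∞) else 0)
          = (Set.Ioc a ξ).indicator (fun _ => (1:ℝ≥0∞)) τ := by
        intro τ
        rw [Set.indicator_apply]
        by_cases h : τ ∈ Set.Ioc a ξ
        · rw [if_pos ⟨h.1, h.2, hξ.2⟩, if_pos h]
        · rw [if_neg, if_neg h]
          rintro ⟨h1, h2, -⟩; exact h ⟨h1, h2⟩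
      rw [lintegral_congr hpt, lintegral_indicator measurableSet_Ioc, setLIntegral_one,
        Measure.restrict_apply measurableSet_Ioc, Set.indicator_of_mem (Set.mem_Ioc.2 hξ)]
      refine vol_between (fun τ hτ => ⟨⟨hτ.1, hτ.2.le⟩,
        ⟨lt_of_le_of_lt ha0 hτ.1, lt_of_lt_of_le hτ.2 (hξ.2.trans hb1)⟩⟩) ?_
      exact fun τ hτ => ⟨hτ.1.1.le, hτ.1.2⟩
    · have hpt : ∀ τ : ℝ, (if a < τ ∧ τ ≤ ξ ∧ ξ ≤ b then (1:ℝ≥0∞) else 0) = 0 := by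
        intro τ
        rw [if_neg]
        rintro ⟨h1, h2, h3⟩; exact hξ ⟨lt_of_lt_of_le h1 h2, h3⟩
      rw [lintegral_congr hpt, lintegral_zero,
        Set.indicator_of_notMem (fun hm => hξ (Set.mem_Ioc.1 hm))]
  rw [lintegral_congr inner, lintegral_indicator measurableSet_Ioc,
    Measure.restrict_restrict measurableSet_Ioc, restrict_Ioc_inter ha0 hb1,
    lint_Ioc_sub_right hab]

private noncomputable def Cfun (F G : ℝ → ℝ) (x ξ τ : ℝ) : ℝ≥0∞ :=
  if (G x < ξ ∧ ξ ≤ τ ∧ τ ≤ F x) ∨ (F x < τ ∧ τ ≤ ξ ∧ ξ ≤ G x) then 1 else 0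

private lemma measC {α : Type*} [MeasurableSpace α] {F G : ℝ → ℝ}
    (hF : Measurable F) (hG : Measurable G) {x ξ τ : α → ℝ}
    (hx : Measurable x) (hξ : Measurable ξ) (hτ : Measurable τ) :
    Measurable (fun p => Cfun F G (x p) (ξ p) (τ p)) := by
  unfold Cfun
  refine Measurable.ite ?_ measurable_const measurable_const
  simp only [Set.setOf_or, Set.setOf_and]
  exact ((measurableSet_lt (hG.comp hx) hξ).inter
      ((measurableSet_le hξ hτ).inter (measurableSet_le hτ (hF.comp hx)))).union
    ((measurableSet_lt (hF.comp hx) hτ).inter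
      ((measurableSet_le hτ hξ).inter (measurableSet_le hξ (hG.comp hx))))

private lemma key_iff {F G : ℝ → ℝ} (hF : Monotone F) (hG : Monotone G)
    (hFrc : ∀ x, ContinuousWithinAt F (Set.Ici x) x)
    (hGrc : ∀ x, ContinuousWithinAt G (Set.Ici x) x)
    (hF0 : Filter.Tendsto F Filter.atBot (nhds 0))
    (hF1 : Filter.Tendsto F Filter.atTop (nhds 1))
    (hG0 : Filter.Tendsto G Filter.atBot (nhds 0))
    (hG1 : Filter.Tendsto G Filter.atTop (nhds 1))
    {τ ξ : ℝ} (hτ : τ ∈ Set.Ioo (0:ℝ) 1) (hξ : ξ ∈ Set.Ioo (0:ℝ) 1) (x : ℝ) :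
    ((Real.sign (τ - ξ) ≠ Real.sign (quantile F τ - quantile G ξ)) ∧
      ((quantile F τ ≤ x) ≠ (quantile G ξ ≤ x)))
    ↔ ((G x < ξ ∧ ξ ≤ τ ∧ τ ≤ F x) ∨ (F x < τ ∧ τ ≤ ξ ∧ ξ ≤ G x)) := by
  have hqF := quantile_le_iff hF hFrc hF0 hF1 hτ.1 hτ.2 x
  have hqG := quantile_le_iff hG hGrc hG0 hG1 hξ.1 hξ.2 x
  constructor
  · rintro ⟨hs, hsd⟩
    rw [ne_eq, eq_iff_iff] at hsd
    by_cases h1 : quantile F τ ≤ x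
    · have h2 : ¬ quantile G ξ ≤ x := fun h2 => hsd ⟨fun _ => h2, fun _ => h1⟩
      left
      refine ⟨not_le.1 (fun h => h2 (hqG.2 h)), ?_, hqF.1 h1⟩
      have hlt : quantile F τ - quantile G ξ < 0 := sub_neg.2 (h1.trans_lt (not_le.1 h2))
      rw [Real.sign_of_neg hlt] at hs
      by_contra hc
      exact hs (Real.sign_of_neg (sub_neg.2 (not_le.1 hc)))
    · have h2 : quantile G ξ ≤ x := by
        by_contra h2
        exact hsd (iff_of_false h1 h2)
      right
      refine ⟨not_le.1 (fun h => h1 (hqF.2 h)), ?_, hqG.1 h2⟩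
      have hpos : 0 < quantile F τ - quantile G ξ := sub_pos.2 (h2.trans_lt (not_le.1 h1))
      rw [Real.sign_of_pos hpos] at hs
      by_contra hc
      exact hs (Real.sign_of_pos (sub_pos.2 (not_le.1 hc)))
  · rintro (⟨h1, h2, h3⟩ | ⟨h1, h2, h3⟩)
    · have hA : quantile F τ ≤ x := hqF.2 h3
      have hB : ¬ quantile G ξ ≤ x := fun h => absurd (hqG.1 h) (not_le.2 h1)
      refine ⟨?_, ?_⟩
      · rw [Real.sign_of_neg (sub_neg.2 (hA.trans_lt (not_le.1 hB)))]
        rcases eq_or_lt_of_le h2 with he | hlt2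
        · rw [show τ - ξ = 0 by rw [he]; ring, Real.sign_zero]
          norm_num
        · rw [Real.sign_of_pos (sub_pos.2 hlt2)]
          norm_num
      · rw [ne_eq, eq_iff_iff]
        exact fun hiff => hB (hiff.1 hA)
    · have hB : quantile G ξ ≤ x := hqG.2 h3
      have hA : ¬ quantile F τ ≤ x := fun h => absurd (hqF.1 h) (not_le.2 h1)
      refine ⟨?_, ?_⟩
      · rw [Real.sign_of_pos (sub_pos.2 (hB.trans_lt (not_le.1 hA)))]
        rcases eq_or_lt_of_le h2 with he | hlt2
        · rw [show τ - ξ = 0 by rw [he]; ring, Real.sign_zero]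
          norm_num
        · rw [Real.sign_of_neg (sub_neg.2 hlt2)]
          norm_num
      · rw [ne_eq, eq_iff_iff]
        exact fun hiff => hA (hiff.2 hB)

end Aux

/-- The Cramér distance admits the quantile representation
`CD(F,G) = 2 ∫₀¹∫₀¹ χ(τ,ξ)·|F⁻¹(τ) − G⁻¹(ξ)| dτ dξ`, where
`χ(τ,ξ) = 1` iff `sgn(τ − ξ) ≠ sgn(F⁻¹(τ) − G⁻¹(ξ))`.
Both sides are taken in the extended reals. -/
theorem cramer_quantile_representation (F G : ℝ → ℝ)
    (hF : Monotone F) (hG : Monotone G)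
    (hFrc : ∀ x, ContinuousWithinAt F (Set.Ici x) x)
    (hGrc : ∀ x, ContinuousWithinAt G (Set.Ici x) x)
    (hF0 : Filter.Tendsto F Filter.atBot (nhds 0))
    (hF1 : Filter.Tendsto F Filter.atTop (nhds 1))
    (hG0 : Filter.Tendsto G Filter.atBot (nhds 0))
    (hG1 : Filter.Tendsto G Filter.atTop (nhds 1)) :
    (∫⁻ x : ℝ, ENNReal.ofReal ((F x - G x) ^ 2)) =
      2 * ∫⁻ ξ in Set.Ioo (0:ℝ) 1, ∫⁻ τ in Set.Ioo (0:ℝ) 1,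
        (if Real.sign (τ - ξ) ≠ Real.sign (quantile F τ - quantile G ξ)
          then ENNReal.ofReal |quantile F τ - quantile G ξ| else 0) := by
  have hFm : Measurable F := hF.measurable
  have hGm : Measurable G := hG.measurable
  have hFx0 : ∀ x, 0 ≤ F x := fun x =>
    le_of_tendsto hF0 (Filter.eventually_atBot.2 ⟨x, fun y hy => hF hy⟩)
  have hFx1 : ∀ x, F x ≤ 1 := fun x =>
    ge_of_tendsto hF1 (Filter.eventually_atTop.2 ⟨x, fun y hy => hF hy⟩)
  have hGx0 : ∀ x, 0 ≤ G x := fun x =>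
    le_of_tendsto hG0 (Filter.eventually_atBot.2 ⟨x, fun y hy => hG hy⟩)
  have hGx1 : ∀ x, G x ≤ 1 := fun x =>
    ge_of_tendsto hG1 (Filter.eventually_atTop.2 ⟨x, fun y hy => hG hy⟩)
  -- pointwise computation in x
  have key : ∀ x : ℝ,
      (∫⁻ ξ in Set.Ioo (0:ℝ) 1, ∫⁻ τ in Set.Ioo (0:ℝ) 1, Cfun F G x ξ τ)
        = ENNReal.ofReal ((F x - G x)^2 / 2) := by
    intro x
    rcases le_total (G x) (F x) with hcase | hcase
    · have hpt : ∀ ξ τ : ℝ, Cfun F G x ξ τ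
          = (if G x < ξ ∧ ξ ≤ τ ∧ τ ≤ F x then (1:ℝ≥0∞) else 0) := by
        intro ξ τ
        unfold Cfun
        refine if_congr (or_iff_left ?_) rfl rfl
        rintro ⟨h1, h2, h3⟩
        exact absurd ((h2.trans h3).trans hcase) (not_le.2 h1)
      calc (∫⁻ ξ in Set.Ioo (0:ℝ) 1, ∫⁻ τ in Set.Ioo (0:ℝ) 1, Cfun F G x ξ τ)
          = ∫⁻ ξ in Set.Ioo (0:ℝ) 1, ∫⁻ τ in Set.Ioo (0:ℝ) 1,
              (if G x < ξ ∧ ξ ≤ τ ∧ τ ≤ F x then (1:ℝ≥0∞) else 0) :=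
            lintegral_congr fun ξ => lintegral_congr fun τ => hpt ξ τ
        _ = ENNReal.ofReal ((F x - G x)^2 / 2) :=
            tri (F x) (G x) (hGx0 x) hcase (hFx1 x)
    · have hpt : ∀ ξ τ : ℝ, Cfun F G x ξ τ
          = (if F x < τ ∧ τ ≤ ξ ∧ ξ ≤ G x then (1:ℝ≥0∞) else 0) := by
        intro ξ τ
        unfold Cfun
        refine if_congr (or_iff_right ?_) rfl rfl
        rintro ⟨h1, h2, h3⟩
        exact absurd ((h2.trans h3).trans hcase) (not_le.2 h1)
      calc (∫⁻ ξ in Set.Ioo (0:ℝ) 1, ∫⁻ τ in Set.Ioo (0:ℝ) 1, Cfun F G x ξ τ)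
          = ∫⁻ ξ in Set.Ioo (0:ℝ) 1, ∫⁻ τ in Set.Ioo (0:ℝ) 1,
              (if F x < τ ∧ τ ≤ ξ ∧ ξ ≤ G x then (1:ℝ≥0∞) else 0) :=
            lintegral_congr fun ξ => lintegral_congr fun τ => hpt ξ τ
        _ = ENNReal.ofReal ((G x - F x)^2 / 2) :=
            tri2 (F x) (G x) (hFx0 x) hcase (hGx1 x)
        _ = ENNReal.ofReal ((F x - G x)^2 / 2) := by rw [show (G x - F x)^2 = (F x - G x)^2 by ring]
  -- identification of the inner term
  have term_eq : ∀ ξ ∈ Set.Ioo (0:ℝ) 1, ∀ τ ∈ Set.Ioo (0:ℝ) 1,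
      (∫⁻ x : ℝ, Cfun F G x ξ τ)
        = (if Real.sign (τ - ξ) ≠ Real.sign (quantile F τ - quantile G ξ)
            then ENNReal.ofReal |quantile F τ - quantile G ξ| else 0) := by
    intro ξ hξ τ hτ
    by_cases hχ : Real.sign (τ - ξ) ≠ Real.sign (quantile F τ - quantile G ξ)
    · rw [if_pos hχ, ← lint_sd (quantile F τ) (quantile G ξ)]
      refine lintegral_congr fun x => ?_
      unfold Cfun
      by_cases hsd : (quantile F τ ≤ x) ≠ (quantile G ξ ≤ x)
      · rw [if_pos ((key_iff hF hG hFrc hGrc hF0 hF1 hG0 hG1 hτ hξ x).1 ⟨hχ, hsd⟩), if_pos hsd]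
      · rw [if_neg (fun h => hsd ((key_iff hF hG hFrc hGrc hF0 hF1 hG0 hG1 hτ hξ x).2 h).2),
          if_neg hsd]
    · rw [if_neg hχ]
      have hz : ∀ x : ℝ, Cfun F G x ξ τ = 0 := by
        intro x
        unfold Cfun
        rw [if_neg (fun h => hχ ((key_iff hF hG hFrc hGrc hF0 hF1 hG0 hG1 hτ hξ x).2 h).1)]
      rw [lintegral_congr hz, lintegral_zero]
  -- measurability for the swaps
  have meas1 : Measurable (Function.uncurry fun (x : ℝ) (ξ : ℝ) =>
      ∫⁻ τ in Set.Ioo (0:ℝ) 1, Cfun F G x ξ τ) := by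
    exact Measurable.lintegral_prod_right (f := fun (p : ℝ × ℝ) (τ : ℝ) => Cfun F G p.1 p.2 τ)
      (measC hFm hGm (measurable_fst.comp measurable_fst) (measurable_snd.comp measurable_fst)
        measurable_snd)
  have swap1 : (∫⁻ x : ℝ, ∫⁻ ξ in Set.Ioo (0:ℝ) 1, ∫⁻ τ in Set.Ioo (0:ℝ) 1, Cfun F G x ξ τ)
      = ∫⁻ ξ in Set.Ioo (0:ℝ) 1, ∫⁻ x : ℝ, ∫⁻ τ in Set.Ioo (0:ℝ) 1, Cfun F G x ξ τ :=
    lintegral_lintegral_swap meas1.aemeasurable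
  have swap2 : ∀ ξ : ℝ, (∫⁻ x : ℝ, ∫⁻ τ in Set.Ioo (0:ℝ) 1, Cfun F G x ξ τ)
      = ∫⁻ τ in Set.Ioo (0:ℝ) 1, ∫⁻ x : ℝ, Cfun F G x ξ τ := fun ξ =>
    lintegral_lintegral_swap
      ((measC hFm hGm measurable_fst measurable_const measurable_snd).aemeasurable)
  calc (∫⁻ x : ℝ, ENNReal.ofReal ((F x - G x) ^ 2))
      = ∫⁻ x : ℝ, 2 * ∫⁻ ξ in Set.Ioo (0:ℝ) 1, ∫⁻ τ in Set.Ioo (0:ℝ) 1, Cfun F G x ξ τ := by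
        refine lintegral_congr fun x => ?_
        rw [key x, show (2:ℝ≥0∞) = ENNReal.ofReal 2 from (ENNReal.ofReal_ofNat 2).symm,
          ← ENNReal.ofReal_mul (by norm_num : (0:ℝ) ≤ 2)]
        congr 1
        ring
    _ = 2 * ∫⁻ x : ℝ, ∫⁻ ξ in Set.Ioo (0:ℝ) 1, ∫⁻ τ in Set.Ioo (0:ℝ) 1, Cfun F G x ξ τ :=
        lintegral_const_mul' 2 _ (by norm_num)
    _ = 2 * ∫⁻ ξ in Set.Ioo (0:ℝ) 1, ∫⁻ x : ℝ, ∫⁻ τ in Set.Ioo (0:ℝ) 1, Cfun F G x ξ τ := by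
        rw [swap1]
    _ = 2 * ∫⁻ ξ in Set.Ioo (0:ℝ) 1, ∫⁻ τ in Set.Ioo (0:ℝ) 1, ∫⁻ x : ℝ, Cfun F G x ξ τ := by
        rw [lintegral_congr swap2]
    _ = 2 * ∫⁻ ξ in Set.Ioo (0:ℝ) 1, ∫⁻ τ in Set.Ioo (0:ℝ) 1,
        (if Real.sign (τ - ξ) ≠ Real.sign (quantile F τ - quantile G ξ)
          then ENNReal.ofReal |quantile F τ - quantile G ξ| else 0) := by
        congr 1
        refine setLIntegral_congr_fun measurableSet_Ioo (fun ξ hξ => ?_)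
        exact setLIntegral_congr_fun measurableSet_Ioo (fun τ hτ => term_eq ξ hξ τ hτ)
end
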